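/- Let δ ∈ (0, 1/2], let v ∈ ℝ with 0 ≤ v ≤ δ, and let c ∈ ℝ with 0 ≤ c ≤ 1/8. Then every λ ∈ ℂ with λ ≠ 0 satisfying v/λ − v − c(λ−1)/λ² = λ + δ − 1 has |λ| < 1 − δ/4. -/

import Mathlib

set_option maxHeartbeats 800000

/-- Scalar estimate for momentum policies (Section 3.1.2): if `δ ∈ (0, 1/2]`,
`0 ≤ v ≤ δ` and `0 ≤ c ≤ 1/8`, then every nonzero `λ ∈ ℂ` with
`v/λ − v − c(λ−1)/λ² = λ + δ − 1` satisfies `|λ| < 1 − δ/4`. -/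
theorem stmt8 (δ : ℝ) (hδ : δ ∈ Set.Ioc (0 : ℝ) (1 / 2))
    (v : ℝ) (hv0 : 0 ≤ v) (hvδ : v ≤ δ) (c : ℝ) (hc0 : 0 ≤ c) (hc : c ≤ 1 / 8)
    (lam : ℂ) (hlam0 : lam ≠ 0)
    (hlam : (v : ℂ) / lam - (v : ℂ) - (c : ℂ) * (lam - 1) / lam ^ 2 = lam + (δ : ℂ) - 1) :
    ‖lam‖ < 1 - δ / 4 := by
  obtain ⟨hδ0, hδ2⟩ := hδ
  have key : lam^3 + ((v:ℂ)+δ-1)*lam^2 + ((c:ℂ)-v)*lam - c = 0 := by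
    have h : lam * (lam^3 + ((v:ℂ)+δ-1)*lam^2 + ((c:ℂ)-v)*lam - c) = 0 := by
      field_simp at hlam
      linear_combination -lam * hlam
    rcases mul_eq_zero.mp h with h' | h'
    · exact absurd h' hlam0
    · exact h'
  set x := lam.re with hxdef
  set y := lam.im with hydef
  rw [Complex.ext_iff] at key
  obtain ⟨h1, h2⟩ := key
  simp only [Complex.add_re, Complex.add_im, Complex.sub_re, Complex.sub_im, Complex.mul_re,
    Complex.mul_im, Complex.ofReal_re, Complex.ofReal_im, Complex.one_re, Complex.one_im,
    Complex.zero_re, Complex.zero_im, pow_succ, pow_zero, one_mul] at h1 h2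
  have hre : x^3 - 3*x*y^2 + (v+δ-1)*(x^2-y^2) + (c-v)*x - c = 0 := by linear_combination h1
  have him : y * (3*x^2 - y^2 + 2*(v+δ-1)*x + (c-v)) = 0 := by linear_combination h2
  clear h1 h2 hlam
  have hr0 : (0:ℝ) < 1 - δ/4 := by linarith
  suffices hlt : x^2 + y^2 < (1 - δ/4)^2 by
    have habs : (‖lam‖)^2 = x^2 + y^2 := by
      rw [Complex.sq_norm, Complex.normSq_apply]; ring
    nlinarith [norm_nonneg lam]
  by_contra hge
  push_neg at hge
  rcases eq_or_ne y 0 with hy | hy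
  · -- real root case
    have hy2z : y^2 = 0 := by rw [hy]; ring
    have hx2 : (1 - δ/4)^2 ≤ x^2 := by nlinarith
    have hx0 : x ≠ 0 := by
      intro h0
      apply hlam0
      have : lam.re = 0 := by rw [← hxdef, h0]
      have him0 : lam.im = 0 := by rw [← hydef, hy]
      exact Complex.ext this him0
    have hxeq : (x-1)*(x^2+v*x+c) + δ*x^2 = 0 := by
      linear_combination hre + (3*x*y + (v+δ-1)*y) * hy
    rcases lt_or_gt_of_ne hx0 with hxneg | hxpos
    · -- x < 0, so x ≤ -(1-δ/4) ≤ -7/8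
      have hxle : x ≤ -(1 - δ/4) := by nlinarith
      have hx78 : x ≤ -(7:ℝ)/8 := by linarith
      nlinarith [mul_nonneg hv0 (neg_nonneg.mpr hxneg.le), sq_nonneg (x+1), sq_nonneg x,
        mul_pos (mul_pos (neg_pos.mpr hxneg) (neg_pos.mpr hxneg)) (neg_pos.mpr hxneg)]
    · -- x > 0, so x ≥ 1-δ/4 ≥ 7/8
      have hxge : 1 - δ/4 ≤ x := by nlinarith
      have hx78 : (7:ℝ)/8 ≤ x := by linarith
      have hq : (0:ℝ) < x^2 + v*x + c := by nlinarith
      rcases le_or_gt 1 x with hx1 | hx1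
      · nlinarith [mul_nonneg (sub_nonneg.mpr hx1) hq.le, mul_pos hδ0 (mul_pos hxpos hxpos)]
      · have h1x : 1 - x ≤ δ/4 := by linarith
        nlinarith [mul_le_mul_of_nonneg_right h1x hq.le, mul_pos hδ0 (mul_pos hxpos hxpos),
          mul_lt_mul_of_pos_left hx1 hδ0]
  · -- complex case
    have hy2 : y^2 = 3*x^2 + 2*(v+δ-1)*x + (c-v) := by
      rcases mul_eq_zero.mp him with h | h
      · exact absurd h hy
      · linarith
    set t : ℝ := -(2*x + (v+δ-1)) with htdef
    have htc : t * (x^2 + y^2) = c := by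
      rw [htdef]; linear_combination hre + x * hy2
    have hrad : x^2 + y^2 = t^2 + (v+δ-1)*t + (c-v) := by
      rw [htdef]; linear_combination hy2
    have hypos : 0 < y^2 := by positivity
    have hpos : 0 < x^2 + y^2 := by positivity
    rcases eq_or_lt_of_le hc0 with hc0' | hcpos
    · -- c = 0
      have ht0 : t = 0 := by
        have h' := htc
        rw [← hc0'] at h'
        exact (mul_eq_zero.mp h').resolve_right (ne_of_gt hpos)
      rw [ht0] at hrad
      nlinarith
    · -- c > 0
      have htpos : 0 < t := by
        by_contra hle
        push_neg at hle
        nlinarith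
      have h4964 : (49:ℝ)/64 ≤ x^2 + y^2 := by nlinarith
      have ht849 : t ≤ 8/49 := by
        nlinarith [mul_le_mul_of_nonneg_left h4964 htpos.le]
      have hcube : t^3 + (v+δ-1)*t^2 + (c-v)*t = c := by
        linear_combination htc - t * hrad
      rcases le_or_gt (t + (v+δ-1)) 0 with hta | hta
      · nlinarith [mul_nonpos_of_nonneg_of_nonpos (sq_nonneg t) hta,
          mul_nonneg hv0 htpos.le, mul_le_mul_of_nonneg_left ht849 hcpos.le]
      · have hvbig : (33:ℝ)/98 ≤ v := by linarith
        nlinarith [mul_le_mul_of_nonneg_left ht849 (mul_pos htpos htpos).le,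
          mul_le_mul_of_nonneg_left ht849 htpos.le,
          mul_le_mul_of_nonneg_left hvbig htpos.le,
          mul_le_mul_of_nonneg_left ht849 hcpos.le, sq_nonneg t]
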